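/- For every p ≥ 4 with p ≠ 5, there exists a simple bipartite planar graph in which both parts consist of p vertices, all of degree 3. -/

import Mathlib

/-- A topological plane embedding (drawing) of a simple graph: vertices are points
of the plane, edges are injective continuous arcs meeting only at common endpoints. -/
structure PlaneEmb {V : Type} (G : SimpleGraph V) where
  pos : V → ℝ × ℝ
  pos_inj : Function.Injective pos
  arc : ∀ ⦃u v : V⦄, G.Adj u v → unitInterval → ℝ × ℝ
  arc_cont : ∀ ⦃u v : V⦄ (h : G.Adj u v), Continuous (arc h)
  arc_inj : ∀ ⦃u v : V⦄ (h : G.Adj u v), Function.Injective (arc h)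
  arc_zero : ∀ ⦃u v : V⦄ (h : G.Adj u v), arc h 0 = pos u
  arc_one : ∀ ⦃u v : V⦄ (h : G.Adj u v), arc h 1 = pos v
  arc_symm : ∀ ⦃u v : V⦄ (h : G.Adj u v) (t : unitInterval),
    arc h.symm (unitInterval.symm t) = arc h t
  arc_vertex : ∀ ⦃u v : V⦄ (h : G.Adj u v) (t : unitInterval),
    (∃ w, arc h t = pos w) → t = 0 ∨ t = 1
  arc_disj : ∀ ⦃u v x y : V⦄ (h : G.Adj u v) (h' : G.Adj x y),
    s(u, v) ≠ s(x, y) → ∀ t₁ t₂ : unitInterval, arc h t₁ = arc h' t₂ → ∃ w, arc h t₁ = pos w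

/-- The pair `(a^p | b^q)` is planar graphic: there is a simple bipartite planar graph
one of whose parts has `p` vertices, all of degree `a`, and the other part has `q`
vertices, all of degree `b`. -/
def PlanarPair (a p b q : ℕ) : Prop :=
  ∃ (V : Type) (_ : Finite V) (G : SimpleGraph V) (A B : Set V),
    Disjoint A B ∧ A ∪ B = Set.univ ∧ A.ncard = p ∧ B.ncard = q ∧
    (∀ ⦃u v⦄, G.Adj u v → ((u ∈ A ∧ v ∈ B) ∨ (u ∈ B ∧ v ∈ A))) ∧
    (∀ v ∈ A, (G.neighborSet v).ncard = a) ∧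
    (∀ v ∈ B, (G.neighborSet v).ncard = b) ∧
    Nonempty (PlaneEmb G)


open Real unitInterval

/-- Upper/lower semicircular arc over the real interval `[a,b]`; `s = 1` draws it
above the axis, `s = -1` below. -/
noncomputable def halfArc (a b s : ℝ) (t : unitInterval) : ℝ × ℝ :=
  ((a+b)/2 - (b-a)/2 * Real.cos (Real.pi * t),
    s * ((b-a)/2 * Real.sin (Real.pi * t)))

lemma halfArc_zero (a b s : ℝ) : halfArc a b s 0 = (a, 0) := by
  simp [halfArc]; ring

lemma halfArc_one (a b s : ℝ) : halfArc a b s 1 = (b, 0) := by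
  simp [halfArc]; ring

lemma halfArc_cont (a b s : ℝ) : Continuous (halfArc a b s) := by
  unfold halfArc; fun_prop

lemma halfArc_strictMono_x (a b s : ℝ) (hab : a < b) {t₁ t₂ : unitInterval}
    (h : t₁ < t₂) : (halfArc a b s t₁).1 < (halfArc a b s t₂).1 := by
  have h1 : Real.cos (Real.pi * t₂) < Real.cos (Real.pi * t₁) := by
    apply Real.cos_lt_cos_of_nonneg_of_le_pi
    · exact mul_nonneg Real.pi_pos.le t₁.2.1
    · nlinarith [t₂.2.2, Real.pi_pos]
    · have := Real.pi_pos
      have : (t₁:ℝ) < t₂ := h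
      nlinarith
  simp only [halfArc]
  nlinarith

lemma halfArc_inj (a b s : ℝ) (hab : a < b) : Function.Injective (halfArc a b s) := by
  intro t₁ t₂ h
  rcases lt_trichotomy t₁ t₂ with hlt | he | hlt
  · exact absurd (congrArg Prod.fst h) (ne_of_lt (halfArc_strictMono_x a b s hab hlt))
  · exact he
  · exact absurd (congrArg Prod.fst h) (ne_of_gt (halfArc_strictMono_x a b s hab hlt))

/-- The point lies on the circle with diameter `[a,b]`. -/
lemma halfArc_on_circle (a b s : ℝ) (hs : s = 1 ∨ s = -1) (t : unitInterval) :
    ((halfArc a b s t).1 - a) * (b - (halfArc a b s t).1) = (halfArc a b s t).2 ^ 2 := by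
  have hcs := Real.sin_sq_add_cos_sq (Real.pi * t)
  rcases hs with h | h <;> simp only [halfArc, h] <;> linear_combination (-((b-a)/2)^2) * hcs

lemma halfArc_y_sign (a b : ℝ) (hab : a < b) (s : ℝ) (t : unitInterval) :
    0 ≤ s * (halfArc a b s t).2 := by
  have hsin : 0 ≤ Real.sin (Real.pi * t) := by
    apply Real.sin_nonneg_of_nonneg_of_le_pi
    · exact mul_nonneg Real.pi_pos.le t.2.1
    · nlinarith [t.2.2, Real.pi_pos]
  simp only [halfArc]
  nlinarith [mul_nonneg (sq_nonneg s) (mul_nonneg (by linarith : (0:ℝ) ≤ (b-a)/2) hsin)]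

lemma halfArc_y_eq_zero (a b s : ℝ) (hab : a < b) (hs : s = 1 ∨ s = -1)
    (t : unitInterval) (h : (halfArc a b s t).2 = 0) : t = 0 ∨ t = 1 := by
  by_contra hc
  push_neg at hc
  have h0 : 0 < (t:ℝ) := by
    rcases lt_or_eq_of_le t.2.1 with h' | h'
    · exact h'
    · exact absurd (Subtype.ext h'.symm) hc.1
  have h1 : (t:ℝ) < 1 := by
    rcases lt_or_eq_of_le t.2.2 with h' | h'
    · exact h'
    · exact absurd (Subtype.ext h') hc.2
  have hsin : 0 < Real.sin (Real.pi * t) := by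
    apply Real.sin_pos_of_pos_of_lt_pi
    · positivity
    · nlinarith [Real.pi_pos]
  simp only [halfArc] at h
  rcases hs with h' | h' <;> rw [h'] at h <;> nlinarith

/-- On-circle point with `y = 0` is an endpoint. -/
lemma circle_y_zero {a b x y : ℝ} (h : (x - a) * (b - x) = y ^ 2) (hy : y = 0) :
    x = a ∨ x = b := by
  subst hy
  rcases mul_eq_zero.1 (by linarith [h] : (x - a) * (b - x) = 0) with h' | h'
  · left; linarith
  · right; linarith

/-- Two circles over nested or disjoint diameters meet only on the axis. -/
lemma circles_meet_axis {a b c d x y : ℝ} (hab : a < b) (hcd : c < d)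
    (h1 : (x - a) * (b - x) = y ^ 2) (h2 : (x - c) * (d - x) = y ^ 2)
    (hlam : (a ≤ c ∧ d ≤ b) ∨ (c ≤ a ∧ b ≤ d) ∨ b ≤ c ∨ d ≤ a)
    (hne : ¬(a = c ∧ b = d)) : y = 0 := by
  by_contra hy
  have hy2 : 0 < y ^ 2 := by positivity
  -- x is strictly inside both intervals
  have hx1 : a < x ∧ x < b := by
    constructor <;> nlinarith
  have hx2 : c < x ∧ x < d := by
    constructor <;> nlinarith
  rcases hlam with ⟨h3, h4⟩ | ⟨h3, h4⟩ | h3 | h3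
  · -- [c,d] ⊆ [a,b] : (b-d)(x-c) + (c-a)(b-x) = 0 with all factors nonneg
    have e1 : (b - d) * (x - c) + (c - a) * (d - x) = 0 := by nlinarith
    have : b = d ∧ a = c := by
      constructor <;> nlinarith [mul_nonneg (by linarith : (0:ℝ) ≤ b - d) (by linarith : (0:ℝ) ≤ x - c),
        mul_nonneg (by linarith : (0:ℝ) ≤ c - a) (by linarith : (0:ℝ) ≤ d - x)]
    exact hne ⟨this.2, this.1⟩
  · have e1 : (d - b) * (x - a) + (a - c) * (b - x) = 0 := by nlinarith
    have : d = b ∧ c = a := by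
      constructor <;> nlinarith [mul_nonneg (by linarith : (0:ℝ) ≤ d - b) (by linarith : (0:ℝ) ≤ x - a),
        mul_nonneg (by linarith : (0:ℝ) ≤ a - c) (by linarith : (0:ℝ) ≤ b - x)]
    exact hne ⟨this.2.symm, this.1.symm⟩
  · linarith [hx1.2, hx2.1]
  · linarith [hx2.2, hx1.1]

/-- Matching pattern inside the initial run (sizes 8, 10, 12, 14). -/
def pat : ℕ → ℕ → ℕ
  | 8, 0 => 3 | 8, 1 => 6 | 8, 2 => 5 | 8, 3 => 0
  | 8, 4 => 7 | 8, 5 => 2 | 8, 6 => 1 | 8, 7 => 4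
  | 10, 0 => 9 | 10, 1 => 4 | 10, 2 => 7 | 10, 3 => 6 | 10, 4 => 1
  | 10, 5 => 8 | 10, 6 => 3 | 10, 7 => 2 | 10, 8 => 5 | 10, 9 => 0
  | 12, 0 => 3 | 12, 1 => 10 | 12, 2 => 5 | 12, 3 => 0 | 12, 4 => 7 | 12, 5 => 2
  | 12, 6 => 9 | 12, 7 => 4 | 12, 8 => 11 | 12, 9 => 6 | 12, 10 => 1 | 12, 11 => 8
  | 14, 0 => 3 | 14, 1 => 6 | 14, 2 => 5 | 14, 3 => 0 | 14, 4 => 9 | 14, 5 => 2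
  | 14, 6 => 1 | 14, 7 => 12 | 14, 8 => 11 | 14, 9 => 4 | 14, 10 => 13 | 14, 11 => 8
  | 14, 12 => 7 | 14, 13 => 10
  | _, i => i

/-- Page assignment (true = upper page) of the run chord with lower endpoint `i`. -/
def pgRun : ℕ → ℕ → Bool
  | 8, i => i = 0 || i = 4
  | 10, i => i = 0 || i = 1 || i = 5
  | 12, i => i = 0 || i = 4 || i = 8
  | 14, i => i = 0 || i = 4 || i = 10
  | _, _ => true

/-- Size of the initial run. -/
def runSz (n : ℕ) : ℕ := 8 + n % 8

/-- The perfect matching: initial run pattern, then blocks of 8. -/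
def mu (n i : ℕ) : ℕ :=
  if i < runSz n then pat (runSz n) i
  else 8 * ((i - runSz n) / 8) + runSz n + pat 8 ((i - runSz n) % 8)

/-- Page of the chord with (lower) endpoint `i`. -/
def pgFun (n i : ℕ) : Bool :=
  if i < runSz n then pgRun (runSz n) i
  else (i - runSz n) % 8 = 0 || (i - runSz n) % 8 = 4

section Comb
variable {n : ℕ} (hn : 8 ≤ n) (he : n % 2 = 0) (h10 : n ≠ 10)

-- run facts by decision
lemma pat_facts : ∀ r ∈ [8, 10, 12, 14], ∀ i < r,
    pat r i < r ∧ pat r (pat r i) = i ∧ pat r i ≠ i ∧ (i + pat r i) % 2 = 1 ∧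
    (pat r i ≤ i + 9) ∧ (i ≤ pat r i + 9) ∧ (i + 3 ≤ pat r i ∨ pat r i + 3 ≤ i) := by
  decide

lemma pat_laminar : ∀ r ∈ [8, 10, 12, 14], ∀ i < r, ∀ j < r,
    (i < pat r i ∧ j < pat r j ∧ i ≠ j ∧ pgRun r i = pgRun r j) →
    pat r i ≤ j ∨ pat r j ≤ i ∨ (i ≤ j ∧ pat r j ≤ pat r i) ∨ (j ≤ i ∧ pat r i ≤ pat r j) := by
  decide

omit he in
include hn in
lemma runSz_le : runSz n ≤ n := by simp only [runSz]; omega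

include hn he in
lemma runSz_mem : runSz n ∈ [8, 10, 12, 14] := by
  have : n % 8 = 0 ∨ n % 8 = 2 ∨ n % 8 = 4 ∨ n % 8 = 6 := by omega
  rcases this with h | h | h | h <;> simp [runSz, h]

-- block facts
lemma pat8_block : ∀ s < 8, pat 8 s < 8 ∧ pat 8 (pat 8 s) = s ∧ pat 8 s ≠ s ∧
    (s + pat 8 s) % 2 = 1 ∧ (pat 8 s ≤ s + 5) ∧ (s ≤ pat 8 s + 5) ∧
    (s + 3 ≤ pat 8 s ∨ pat 8 s + 3 ≤ s) := by decide

omit hn he in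
lemma mu_run {i : ℕ} (h : i < runSz n) : mu n i = pat (runSz n) i := by
  simp [mu, h]

omit hn he in
lemma mu_block {i : ℕ} (h : runSz n ≤ i) :
    mu n i = 8 * ((i - runSz n) / 8) + runSz n + pat 8 ((i - runSz n) % 8) := by
  simp [mu, Nat.not_lt.2 h]

include hn he in
lemma mu_lt {i : ℕ} (h : i < n) : mu n i < n := by
  have hr8 : runSz n = 8 + n % 8 := rfl
  by_cases hr : i < runSz n
  · rw [mu_run hr]
    have := (pat_facts _ (runSz_mem hn he) i hr).1
    omega
  · push_neg at hr
    rw [mu_block hr]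
    have h1 := (pat8_block ((i - runSz n) % 8) (Nat.mod_lt _ (by norm_num))).1
    omega

include hn he in
lemma mu_invol {i : ℕ} (h : i < n) : mu n (mu n i) = i := by
  by_cases hr : i < runSz n
  · rw [mu_run hr]
    have h1 := (pat_facts _ (runSz_mem hn he) i hr).1
    rw [mu_run h1]
    exact (pat_facts _ (runSz_mem hn he) i hr).2.1
  · push_neg at hr
    rw [mu_block hr]
    have h1 := (pat8_block ((i - runSz n) % 8) (Nat.mod_lt _ (show 0<8 by norm_num))).1
    have hge : runSz n ≤ 8 * ((i - runSz n) / 8) + runSz n + pat 8 ((i - runSz n) % 8) := by omega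
    rw [mu_block hge]
    have h2 : 8 * ((i - runSz n) / 8) + runSz n + pat 8 ((i - runSz n) % 8) - runSz n
        = 8 * ((i - runSz n) / 8) + pat 8 ((i - runSz n) % 8) := by omega
    rw [h2]
    have h3 : (8 * ((i - runSz n) / 8) + pat 8 ((i - runSz n) % 8)) % 8 = pat 8 ((i - runSz n) % 8) := by
      omega
    have h4 : (8 * ((i - runSz n) / 8) + pat 8 ((i - runSz n) % 8)) / 8 = (i - runSz n) / 8 := by
      omega
    rw [h3, h4, (pat8_block ((i - runSz n) % 8) (Nat.mod_lt _ (show 0<8 by norm_num))).2.1]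
    omega

include hn he h10 in
lemma mu_gap {i : ℕ} (h : i < n) :
    (i + 3 ≤ mu n i ∨ mu n i + 3 ≤ i) ∧ mu n i + 3 ≤ i + n ∧ i + 3 ≤ mu n i + n := by
  have hr8 : runSz n = 8 + n % 8 := rfl
  by_cases hr : i < runSz n
  · rw [mu_run hr]
    obtain ⟨f1, f2, f3, f4, f5, f6, f7⟩ := pat_facts _ (runSz_mem hn he) i hr
    have hn12 : 12 ≤ n ∨ runSz n = 8 := by omega
    rcases hn12 with h' | h'
    · exact ⟨f7, by omega, by omega⟩
    · rw [h'] at f1 f5 f6 f7 hr ⊢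
      obtain ⟨g1, g2, g3, g4, g5, g6, g7⟩ := pat8_block i hr
      exact ⟨g7, by omega, by omega⟩
  · push_neg at hr
    rw [mu_block hr]
    have h1 := pat8_block ((i - runSz n) % 8) (Nat.mod_lt _ (show 0<8 by norm_num))
    omega

include hn he in
lemma mu_parity {i : ℕ} (h : i < n) : (i + mu n i) % 2 = 1 := by
  by_cases hr : i < runSz n
  · rw [mu_run hr]
    exact (pat_facts _ (runSz_mem hn he) i hr).2.2.2.1
  · push_neg at hr
    rw [mu_block hr]
    have h1 := (pat8_block ((i - runSz n) % 8) (Nat.mod_lt _ (show 0<8 by norm_num))).2.2.2.1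
    omega

lemma pat8_laminar (a b : ℕ) (ha : a < 8) (hb : b < 8)
    (h : a < pat 8 a ∧ b < pat 8 b ∧ a ≠ b ∧ pgRun 8 a = pgRun 8 b) :
    (pat 8 a ≤ b ∨ pat 8 b ≤ a ∨ (a ≤ b ∧ pat 8 b ≤ pat 8 a) ∨ (b ≤ a ∧ pat 8 a ≤ pat 8 b)) :=
  pat_laminar 8 (by simp) a ha b hb h

include hn he in
lemma mu_laminar {i j : ℕ} (hi : i < n) (hj : j < n) (hii : i < mu n i) (hjj : j < mu n j)
    (hij : i ≠ j) (hpg : pgFun n i = pgFun n j) :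
    mu n i ≤ j ∨ mu n j ≤ i ∨ (i ≤ j ∧ mu n j ≤ mu n i) ∨ (j ≤ i ∧ mu n i ≤ mu n j) := by
  have hr8 : runSz n = 8 + n % 8 := rfl
  have hmem := runSz_mem hn he
  by_cases hri : i < runSz n <;> by_cases hrj : j < runSz n
  · rw [mu_run hri] at hii ⊢
    rw [mu_run hrj] at hjj ⊢
    exact pat_laminar _ hmem i hri j hrj ⟨hii, hjj, hij, by simpa [pgFun, hri, hrj] using hpg⟩
  · push_neg at hrj
    left
    rw [mu_run hri]
    have := (pat_facts _ hmem i hri).1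
    omega
  · push_neg at hri
    right; left
    rw [mu_run hrj]
    have := (pat_facts _ hmem j hrj).1
    omega
  · push_neg at hri hrj
    rw [mu_block hri] at hii ⊢
    rw [mu_block hrj] at hjj ⊢
    have h1 := (pat8_block ((i - runSz n) % 8) (Nat.mod_lt _ (show 0<8 by norm_num))).1
    have h2 := (pat8_block ((j - runSz n) % 8) (Nat.mod_lt _ (show 0<8 by norm_num))).1
    by_cases hq : (i - runSz n) / 8 = (j - runSz n) / 8
    · rw [hq] at hii ⊢
      simp only [pgFun, if_neg (Nat.not_lt.2 hri), if_neg (Nat.not_lt.2 hrj)] at hpg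
      have hpg' : pgRun 8 ((i - runSz n) % 8) = pgRun 8 ((j - runSz n) % 8) := by
        simpa [pgRun] using hpg
      have := pat8_laminar ((i - runSz n) % 8) ((j - runSz n) % 8) (by omega) (by omega)
        ⟨by omega, by omega, by omega, hpg'⟩
      omega
    · have : (i - runSz n) / 8 < (j - runSz n) / 8 ∨ (j - runSz n) / 8 < (i - runSz n) / 8 := by
        omega
      rcases this with h' | h'
      · left; omega
      · right; left; omega

end Comb

/-! ### The graph and its drawing -/

def ERel (n a b : ℕ) : Prop :=
  b = a + 1 ∨ a = b + 1 ∨ (a = 0 ∧ b = n - 1) ∨ (b = 0 ∧ a = n - 1) ∨ (b = mu n a ∧ a = mu n b)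

def GG (n : ℕ) : SimpleGraph (Fin n) where
  Adj u v := u ≠ v ∧ ERel n u.val v.val
  symm := by
    constructor
    rintro u v ⟨h1, h2⟩
    refine ⟨h1.symm, ?_⟩
    unfold ERel at *; tauto
  loopless := by constructor; rintro u ⟨h, _⟩; exact h rfl

noncomputable def chordSgn (n a b : ℕ) : ℝ :=
  if a = 0 ∧ b = n - 1 then -1 else if pgFun n a then 1 else -1

noncomputable def draw (n a b : ℕ) (t : unitInterval) : ℝ × ℝ :=
  if b = a + 1 then ((a : ℝ) + t, 0) else halfArc a b (chordSgn n a b) t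

noncomputable def arcFun (n : ℕ) (u v : Fin n) (t : unitInterval) : ℝ × ℝ :=
  if u.val < v.val then draw n u.val v.val t else draw n v.val u.val (unitInterval.symm t)

lemma chordSgn_pm (n a b : ℕ) : chordSgn n a b = 1 ∨ chordSgn n a b = -1 := by
  unfold chordSgn
  split <;> [right; skip]
  · rfl
  · split <;> [left; right] <;> rfl

/-- Edge type for a canonically ordered pair. -/
def ET (n a b : ℕ) : Prop :=
  b = a + 1 ∨ (a = 0 ∧ b = n - 1 ∧ a + 1 < b) ∨
    (b = mu n a ∧ a + 3 ≤ b ∧ b + 3 ≤ a + n)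

section Master
variable {n : ℕ} (hn : 8 ≤ n) (he : n % 2 = 0) (h10 : n ≠ 10)

include hn he h10 in
lemma adj_ET {u v : Fin n} (h : (GG n).Adj u v) (hlt : u.val < v.val) : ET n u.val v.val := by
  obtain ⟨hne, hrel⟩ := h
  rcases hrel with h' | h' | h' | h' | h'
  · exact Or.inl h'
  · omega
  · refine Or.inr (Or.inl ⟨h'.1, h'.2, by omega⟩)
  · omega
  · have hg := (mu_gap hn he h10 u.isLt).1
    rw [← h'.1] at hg
    rcases hg with hg | hg
    · refine Or.inr (Or.inr ⟨h'.1, hg, ?_⟩)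
      have := (mu_gap hn he h10 u.isLt).2.1
      rw [← h'.1] at this
      omega
    · omega

lemma draw_zero {a b : ℕ} (hab : a < b) : draw n a b 0 = ((a : ℝ), 0) := by
  unfold draw
  split
  · simp
  · simpa using halfArc_zero (a:ℝ) b (chordSgn n a b)

lemma draw_one {a b : ℕ} (hab : a < b) : draw n a b 1 = ((b : ℝ), 0) := by
  unfold draw
  split
  · rename_i h
    subst h
    simp
  · simpa using halfArc_one (a:ℝ) b (chordSgn n a b)

lemma draw_cont (a b : ℕ) : Continuous (draw n a b) := by
  unfold draw
  split
  · fun_prop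
  · exact halfArc_cont _ _ _

lemma draw_inj {a b : ℕ} (hab : a < b) : Function.Injective (draw n a b) := by
  unfold draw
  split
  · intro t₁ t₂ h
    simp only [Prod.mk.injEq] at h
    exact Subtype.ext (by linarith [h.1])
  · exact halfArc_inj _ _ _ (by exact_mod_cast hab)

lemma draw_vertex {a b : ℕ} (hab : a < b) (hba : b ≤ a + n) (t : unitInterval) (w : Fin n)
    (h : draw n a b t = ((w : ℝ), 0)) : t = 0 ∨ t = 1 := by
  unfold draw at h
  split at h
  · rename_i hs
    simp only [Prod.mk.injEq] at h
    have h1 := h.1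
    have h01 := t.2.1
    have h02 := t.2.2
    have hwa : a ≤ (w : ℕ) := by
      have : (a : ℝ) ≤ ((w : ℕ) : ℝ) := by linarith
      exact_mod_cast this
    have hwb : (w : ℕ) ≤ a + 1 := by
      have : ((w : ℕ) : ℝ) ≤ (a : ℝ) + 1 := by linarith
      exact_mod_cast this
    have hw : a ≤ (w : ℕ) ∧ (w : ℕ) ≤ a + 1 := ⟨hwa, hwb⟩
    rcases (by omega : (w : ℕ) = a ∨ (w : ℕ) = a + 1) with h' | h'
    · left
      apply Subtype.ext
      rw [h'] at h1
      push_cast at h1 ⊢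
      linarith
    · right
      apply Subtype.ext
      rw [h'] at h1
      push_cast at h1 ⊢
      linarith
  · have := congrArg Prod.snd h
    exact halfArc_y_eq_zero _ _ _ (by exact_mod_cast hab) (chordSgn_pm n a b) t this

lemma draw_endpoint {a b : ℕ} (hab : a < b) (hbn : b < n) (hs : ¬ b = a + 1)
    (t : unitInterval) (hy : (draw n a b t).2 = 0) :
    ∃ w : Fin n, draw n a b t = ((w : ℝ), 0) := by
  rw [draw, if_neg hs] at hy ⊢
  have hoc := halfArc_on_circle (a:ℝ) b (chordSgn n a b) (chordSgn_pm n a b) t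
  rcases circle_y_zero hoc hy with h' | h'
  · exact ⟨⟨a, by omega⟩, Prod.ext h' hy⟩
  · exact ⟨⟨b, hbn⟩, Prod.ext h' hy⟩

include hn he h10 in
lemma draw_meet {a b c d : ℕ} (hab : a < b) (hbn : b < n) (hcd : c < d) (hdn : d < n)
    (h1 : ET n a b) (h2 : ET n c d) (hne : ¬(a = c ∧ b = d)) (t₁ t₂ : unitInterval)
    (heq : draw n a b t₁ = draw n c d t₂) :
    ∃ w : Fin n, draw n a b t₁ = ((w : ℝ), 0) := by
  have h01 := t₁.2.1; have h02 := t₁.2.2; have h03 := t₂.2.1; have h04 := t₂.2.2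
  by_cases hs1 : b = a + 1
  · by_cases hs2 : d = c + 1
    · -- both segments
      rw [draw, if_pos hs1] at heq ⊢
      rw [draw, if_pos hs2] at heq
      simp only [Prod.mk.injEq] at heq
      have hx := heq.1
      have hac : a ≠ c := fun h => hne ⟨h, by omega⟩
      rcases Nat.lt_or_ge a c with h' | h'
      · have hca : (a:ℝ) + 1 ≤ (c:ℝ) := by exact_mod_cast Nat.succ_le_of_lt h'
        refine ⟨⟨a+1, by omega⟩, ?_⟩
        have ht1 : (t₁ : ℝ) = 1 := by linarith
        exact Prod.ext (by push_cast; linarith) rfl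
      · have h'' : c < a := lt_of_le_of_ne h' (Ne.symm hac)
        have hca : (c:ℝ) + 1 ≤ (a:ℝ) := by exact_mod_cast Nat.succ_le_of_lt h''
        refine ⟨⟨a, by omega⟩, ?_⟩
        have ht1 : (t₁ : ℝ) = 0 := by linarith
        exact Prod.ext (by linarith) rfl
    · -- segment / circle : common point has y = 0
      have hy : (draw n c d t₂).2 = 0 := by
        rw [← heq, draw, if_pos hs1]
      obtain ⟨w, hw⟩ := draw_endpoint hcd hdn hs2 t₂ hy
      exact ⟨w, by rw [heq, hw]⟩
  · -- first is a circle; show the common point has y = 0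
    have hy : (draw n a b t₁).2 = 0 := by
      by_cases hs2 : d = c + 1
      · rw [heq, draw, if_pos hs2]
      · -- two circles
        rw [draw, if_neg hs1] at heq ⊢
        rw [draw, if_neg hs2] at heq
        have hpm1 := chordSgn_pm n a b
        have hpm2 := chordSgn_pm n c d
        have hoc1 := halfArc_on_circle (a:ℝ) b (chordSgn n a b) hpm1 t₁
        have hoc2 : ((halfArc (a:ℝ) b (chordSgn n a b) t₁).1 - c) *
            ((d:ℝ) - (halfArc (a:ℝ) b (chordSgn n a b) t₁).1)
            = (halfArc (a:ℝ) b (chordSgn n a b) t₁).2 ^ 2 := by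
          rw [heq]
          exact halfArc_on_circle (c:ℝ) d (chordSgn n c d) hpm2 t₂
        by_cases hsg : chordSgn n a b = chordSgn n c d
        · -- same page : use laminarity
          have habr : (a:ℝ) < b := by exact_mod_cast hab
          have hcdr : (c:ℝ) < d := by exact_mod_cast hcd
          have hlam : ((a:ℝ) ≤ c ∧ (d:ℝ) ≤ b) ∨ ((c:ℝ) ≤ a ∧ (b:ℝ) ≤ d) ∨
              (b:ℝ) ≤ c ∨ (d:ℝ) ≤ a := by
            rcases h1 with h1' | h1' | h1'
            · exact absurd h1' hs1
            · rcases h2 with h2' | h2' | h2'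
              · exact absurd h2' hs2
              · exact absurd ⟨by omega, by omega⟩ hne
              · have x1 : a ≤ c := by omega
                have x2 : d ≤ b := by omega
                exact Or.inl ⟨by exact_mod_cast x1, by exact_mod_cast x2⟩
            · rcases h2 with h2' | h2' | h2'
              · exact absurd h2' hs2
              · have x1 : c ≤ a := by omega
                have x2 : b ≤ d := by omega
                exact Or.inr (Or.inl ⟨by exact_mod_cast x1, by exact_mod_cast x2⟩)
              · -- both matching chords
                have hwa : ¬(a = 0 ∧ b = n - 1) := by omega
                have hwc : ¬(c = 0 ∧ d = n - 1) := by omega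
                rw [chordSgn, if_neg hwa, chordSgn, if_neg hwc] at hsg
                have hpg : pgFun n a = pgFun n c := by
                  by_cases hA : pgFun n a <;> by_cases hC : pgFun n c <;>
                    simp [hA, hC] at hsg ⊢ <;> norm_num at hsg
                have hac : a ≠ c := by
                  intro hEq
                  apply hne
                  refine ⟨hEq, ?_⟩
                  rw [h1'.1, h2'.1, hEq]
                have := mu_laminar hn he (by omega : a < n) (by omega : c < n)
                  (by omega) (by omega) hac hpg
                rw [← h1'.1, ← h2'.1] at this
                rcases this with h' | h' | h' | h'
                · right; right; left; exact_mod_cast h'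
                · right; right; right; exact_mod_cast h'
                · left
                  exact ⟨by exact_mod_cast h'.1, by exact_mod_cast h'.2⟩
                · right; left
                  exact ⟨by exact_mod_cast h'.1, by exact_mod_cast h'.2⟩
          have hner : ¬((a:ℝ) = c ∧ (b:ℝ) = d) := by
            rintro ⟨x1, x2⟩
            exact hne ⟨by exact_mod_cast x1, by exact_mod_cast x2⟩
          exact circles_meet_axis habr hcdr hoc1 hoc2 hlam hner
        · -- opposite pages : y has both signs
          have hy1 := halfArc_y_sign (a:ℝ) b (by exact_mod_cast hab) (chordSgn n a b) t₁
          have hy2 := halfArc_y_sign (c:ℝ) d (by exact_mod_cast hcd) (chordSgn n c d) t₂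
          rw [← heq] at hy2
          set y := (halfArc (a:ℝ) b (chordSgn n a b) t₁).2 with hydef
          rcases chordSgn_pm n a b with hpa | hpa <;> rcases chordSgn_pm n c d with hpc | hpc <;>
            rw [hpa] at hy1 <;> rw [hpc] at hy2 <;> first
              | linarith
              | exact absurd (hpa.trans hpc.symm) hsg
    obtain ⟨w, hw⟩ := draw_endpoint hab hbn hs1 t₁ hy
    exact ⟨w, hw⟩

include hn he h10 in
lemma emb_nonempty : Nonempty (PlaneEmb (GG n)) := by
  refine ⟨{
    pos := fun v => ((v.val : ℝ), 0)
    pos_inj := ?_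
    arc := fun u v _ t => arcFun n u v t
    arc_cont := ?_
    arc_inj := ?_
    arc_zero := ?_
    arc_one := ?_
    arc_symm := ?_
    arc_vertex := ?_
    arc_disj := ?_ }⟩
  · intro u v hpos
    have : (u.val : ℝ) = v.val := congrArg Prod.fst hpos
    exact Fin.ext (by exact_mod_cast this)
  · intro u v h
    unfold arcFun
    split
    · exact draw_cont _ _
    · exact (draw_cont _ _).comp unitInterval.continuous_symm
  · intro u v h
    have hne : u.val ≠ v.val := fun hh => h.1 (Fin.ext hh)
    unfold arcFun
    split
    · exact draw_inj (by assumption)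
    · rename_i hlt
      have hvu : v.val < u.val := by omega
      intro t₁ t₂ hh
      have := draw_inj hvu hh
      simpa using congrArg unitInterval.symm this
  · intro u v h
    have hne : u.val ≠ v.val := fun hh => h.1 (Fin.ext hh)
    unfold arcFun
    split
    · exact draw_zero (by assumption)
    · rename_i hlt
      have hvu : v.val < u.val := by omega
      simp only [unitInterval.symm_zero]
      exact draw_one hvu
  · intro u v h
    have hne : u.val ≠ v.val := fun hh => h.1 (Fin.ext hh)
    unfold arcFun
    split
    · exact draw_one (by assumption)
    · rename_i hlt
      have hvu : v.val < u.val := by omega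
      simp only [unitInterval.symm_one]
      exact draw_zero hvu
  · intro u v h t
    have hne : u.val ≠ v.val := fun hh => h.1 (Fin.ext hh)
    unfold arcFun
    rcases Nat.lt_or_ge u.val v.val with hlt | hge
    · rw [if_neg (by omega), if_pos hlt, unitInterval.symm_symm]
    · have hvu : v.val < u.val := by omega
      rw [if_pos hvu, if_neg (by omega)]
  · intro u v h t hex
    obtain ⟨w, hw⟩ := hex
    have hne : u.val ≠ v.val := fun hh => h.1 (Fin.ext hh)
    unfold arcFun at hw
    rcases Nat.lt_or_ge u.val v.val with hlt | hge
    · rw [if_pos hlt] at hw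
      exact draw_vertex hlt (by omega) t w hw
    · have hvu : v.val < u.val := by omega
      rw [if_neg (by omega)] at hw
      have := draw_vertex hvu (by omega) _ w hw
      rcases this with h' | h'
      · right
        simpa using congrArg unitInterval.symm h'
      · left
        simpa using congrArg unitInterval.symm h'
  · intro u v x y h h' hsym t₁ t₂ heq
    have hne1 : u.val ≠ v.val := fun hh => h.1 (Fin.ext hh)
    have hne2 : x.val ≠ y.val := fun hh => h'.1 (Fin.ext hh)
    unfold arcFun at heq ⊢
    rcases Nat.lt_or_ge u.val v.val with hlt1 | hge1 <;>
      rcases Nat.lt_or_ge x.val y.val with hlt2 | hge2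
    · rw [if_pos hlt1] at heq ⊢
      rw [if_pos hlt2] at heq
      have hne : ¬(u.val = x.val ∧ v.val = y.val) := by
        rintro ⟨e1, e2⟩
        exact hsym (by rw [Fin.ext e1, Fin.ext e2])
      obtain ⟨w, hw⟩ := draw_meet hn he h10 hlt1 v.isLt hlt2 y.isLt
        (adj_ET hn he h10 h hlt1) (adj_ET hn he h10 h' hlt2) hne t₁ t₂ heq
      exact ⟨w, hw⟩
    · have hvu2 : y.val < x.val := by omega
      rw [if_pos hlt1] at heq ⊢
      rw [if_neg (by omega)] at heq
      have hne : ¬(u.val = y.val ∧ v.val = x.val) := by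
        rintro ⟨e1, e2⟩
        apply hsym
        rw [Fin.ext e1, Fin.ext e2, Sym2.eq_swap]
      obtain ⟨w, hw⟩ := draw_meet hn he h10 hlt1 v.isLt hvu2 x.isLt
        (adj_ET hn he h10 h hlt1) (adj_ET hn he h10 h'.symm hvu2) hne t₁ _ heq
      exact ⟨w, hw⟩
    · have hvu1 : v.val < u.val := by omega
      rw [if_neg (by omega)] at heq ⊢
      rw [if_pos hlt2] at heq
      have hne : ¬(v.val = x.val ∧ u.val = y.val) := by
        rintro ⟨e1, e2⟩
        apply hsym
        rw [Fin.ext e1, Fin.ext e2, Sym2.eq_swap]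
      obtain ⟨w, hw⟩ := draw_meet hn he h10 hvu1 u.isLt hlt2 y.isLt
        (adj_ET hn he h10 h.symm hvu1) (adj_ET hn he h10 h' hlt2) hne _ t₂ heq
      exact ⟨w, hw⟩
    · have hvu1 : v.val < u.val := by omega
      have hvu2 : y.val < x.val := by omega
      rw [if_neg (by omega)] at heq ⊢
      rw [if_neg (by omega)] at heq
      have hne : ¬(v.val = y.val ∧ u.val = x.val) := by
        rintro ⟨e1, e2⟩
        exact hsym (by rw [Fin.ext e1, Fin.ext e2])
      obtain ⟨w, hw⟩ := draw_meet hn he h10 hvu1 u.isLt hvu2 x.isLt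
        (adj_ET hn he h10 h.symm hvu1) (adj_ET hn he h10 h'.symm hvu2) hne _ _ heq
      exact ⟨w, hw⟩

end Master

/-! ### Degrees and parts -/

def nxtV {n : ℕ} (v : Fin n) : Fin n :=
  if h : v.val + 1 < n then ⟨v.val + 1, h⟩ else ⟨0, v.pos⟩

def prvV {n : ℕ} (v : Fin n) : Fin n :=
  if h : v.val = 0 then ⟨n - 1, Nat.sub_lt v.pos one_pos⟩
  else ⟨v.val - 1, Nat.lt_of_le_of_lt (Nat.sub_le _ _) v.isLt⟩

section Graph
variable {n : ℕ} (hn : 8 ≤ n) (he : n % 2 = 0) (h10 : n ≠ 10)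

include hn he h10 in
lemma neighborSet_eq (v : Fin n) :
    (GG n).neighborSet v = {nxtV v, prvV v, ⟨mu n v.val, mu_lt hn he v.isLt⟩} := by
  have hv := v.isLt
  have hg := mu_gap hn he h10 v.isLt
  have hmul := mu_lt hn he v.isLt
  ext w
  have hw := w.isLt
  simp only [SimpleGraph.mem_neighborSet, Set.mem_insert_iff, Set.mem_singleton_iff]
  constructor
  · rintro ⟨hne, hrel⟩
    rcases hrel with h' | h' | h' | h' | h'
    · left
      apply Fin.ext
      unfold nxtV
      rw [dif_pos (by omega)]
      exact h'
    · right; left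
      apply Fin.ext
      unfold prvV
      rw [dif_neg (by omega)]
      simp only
      omega
    · right; left
      apply Fin.ext
      unfold prvV
      rw [dif_pos h'.1]
      exact h'.2
    · left
      apply Fin.ext
      unfold nxtV
      rw [dif_neg (by omega)]
      exact h'.1
    · right; right
      exact Fin.ext h'.1
  · intro hcase
    rcases hcase with h' | h' | h'
    · subst h'
      unfold nxtV
      by_cases hc : v.val + 1 < n
      · rw [dif_pos hc]
        exact ⟨fun hEq => by have := congrArg Fin.val hEq; dsimp at this; omega,
          Or.inl rfl⟩
      · rw [dif_neg hc]
        refine ⟨fun hEq => by have := congrArg Fin.val hEq; dsimp at this; omega, ?_⟩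
        right; right; right; left
        exact ⟨rfl, by omega⟩
    · subst h'
      unfold prvV
      by_cases hc : v.val = 0
      · rw [dif_pos hc]
        refine ⟨fun hEq => by have := congrArg Fin.val hEq; dsimp at this; omega, ?_⟩
        right; right; left
        exact ⟨hc, rfl⟩
      · rw [dif_neg hc]
        refine ⟨fun hEq => by have := congrArg Fin.val hEq; dsimp at this; omega, ?_⟩
        right; left
        dsimp only
        omega
    · subst h'
      refine ⟨fun hEq => by have := congrArg Fin.val hEq; dsimp at this; omega, ?_⟩
      right; right; right; right
      exact ⟨rfl, (mu_invol hn he hv).symm⟩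

include hn he h10 in
lemma degree3 (v : Fin n) : ((GG n).neighborSet v).ncard = 3 := by
  rw [neighborSet_eq hn he h10 v]
  have hv := v.isLt
  have hg := mu_gap hn he h10 v.isLt
  have hmul := mu_lt hn he v.isLt
  apply Set.ncard_eq_three.2
  refine ⟨nxtV v, prvV v, ⟨mu n v.val, hmul⟩, ?_, ?_, ?_, rfl⟩
  · apply Fin.ne_of_val_ne
    unfold nxtV prvV
    split_ifs <;> dsimp <;> omega
  · apply Fin.ne_of_val_ne
    unfold nxtV
    split_ifs <;> dsimp <;> omega
  · apply Fin.ne_of_val_ne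
    unfold prvV
    split_ifs <;> dsimp <;> omega

end Graph

lemma evens_card (p : ℕ) (hp : 0 < p) :
    {v : Fin (2*p) | v.val % 2 = 0}.ncard = p := by
  rw [Set.ncard_eq_toFinset_card']
  have h1 : {v : Fin (2*p) | v.val % 2 = 0}.toFinset
      = Finset.filter (fun v : Fin (2*p) => v.val % 2 = 0) Finset.univ := by
    ext v; simp
  rw [h1]
  have := Finset.card_bij'
    (s := Finset.filter (fun v : Fin (2*p) => v.val % 2 = 0) Finset.univ)
    (t := (Finset.univ : Finset (Fin p)))
    (i := fun v _ => ⟨v.val / 2, by omega⟩)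
    (j := fun i _ => ⟨2 * i.val, by omega⟩)
    (by intro a ha; exact Finset.mem_univ _)
    (by intro a ha; simp <;> omega)
    (by intro a ha; simp at ha ⊢; apply Fin.ext; simp <;> omega)
    (by intro a ha; apply Fin.ext; simp)
  rw [this, Finset.card_univ, Fintype.card_fin]

lemma odds_card (p : ℕ) (hp : 0 < p) :
    {v : Fin (2*p) | v.val % 2 = 1}.ncard = p := by
  rw [Set.ncard_eq_toFinset_card']
  have h1 : {v : Fin (2*p) | v.val % 2 = 1}.toFinset
      = Finset.filter (fun v : Fin (2*p) => v.val % 2 = 1) Finset.univ := by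
    ext v; simp
  rw [h1]
  have := Finset.card_bij'
    (s := Finset.filter (fun v : Fin (2*p) => v.val % 2 = 1) Finset.univ)
    (t := (Finset.univ : Finset (Fin p)))
    (i := fun v _ => ⟨v.val / 2, by omega⟩)
    (j := fun i _ => ⟨2 * i.val + 1, by omega⟩)
    (by intro a ha; exact Finset.mem_univ _)
    (by intro a ha; simp <;> omega)
    (by intro a ha; simp at ha ⊢; apply Fin.ext; simp <;> omega)
    (by intro a ha; apply Fin.ext; simp <;> omega)
  rw [this, Finset.card_univ, Fintype.card_fin]

theorem planar_three_three' (p : ℕ) (hp : 4 ≤ p) (hp5 : p ≠ 5) :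
    PlanarPair 3 p 3 p := by
  have hn : 8 ≤ 2 * p := by omega
  have he : (2 * p) % 2 = 0 := by omega
  have h10 : 2 * p ≠ 10 := by omega
  refine ⟨Fin (2*p), inferInstance, GG (2*p),
    {v | v.val % 2 = 0}, {v | v.val % 2 = 1}, ?_, ?_, ?_, ?_, ?_, ?_, ?_,
    emb_nonempty hn he h10⟩
  · rw [Set.disjoint_left]
    intro a ha hb
    simp only [Set.mem_setOf_eq] at ha hb
    omega
  · ext v
    simp only [Set.mem_union, Set.mem_setOf_eq, Set.mem_univ, iff_true]
    omega
  · exact evens_card p (by omega)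
  · exact odds_card p (by omega)
  · intro u v huv
    obtain ⟨-, hrel⟩ := huv
    have hu := u.isLt
    have hv := v.isLt
    have hpar : (u.val + v.val) % 2 = 1 := by
      rcases hrel with h' | h' | h' | h' | h'
      · omega
      · omega
      · omega
      · omega
      · have := mu_parity hn he u.isLt
        rw [← h'.1] at this
        exact this
    simp only [Set.mem_setOf_eq]
    omega
  · intro v _
    exact degree3 hn he h10 v
  · intro v _
    exact degree3 hn he h10 v

theorem planar_three_three (p : ℕ) (hp : 4 ≤ p) (hp5 : p ≠ 5) :
    PlanarPair 3 p 3 p :=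
  planar_three_three' p hp hp5
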